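/- Let k be a field and let f_1, f_2 ∈ k[x] be two polynomials generating the unit ideal of k[x]. Let m ≥ 0 be an integer and set d := max(deg(f_1), deg(f_2)). Define the k-vector subspace V of k[x] by V := { f_1 g_1 + f_2 g_2 : g_1, g_2 ∈ k[x], deg(g_j) < m for j = 1, 2 }. Then dim_k(V) = min(2m, m + d) exactly. -/

import Mathlib

open Polynomial

lemma degreeLT_finrank (k : Type*) [Field k] (n : ℕ) :
    Module.finrank k (Polynomial.degreeLT k n) = n := by
  rw [LinearEquiv.finrank_eq (Polynomial.degreeLTEquiv k n)]
  simp

lemma mul_mem_degreeLT_aux {k : Type*} [Field k] {f h : Polynomial k} {m d : ℕ}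
    (hf : f.natDegree ≤ d) (hh : h.degree < ((m - d : ℕ) : WithBot ℕ)) :
    (f * h).degree < (m : WithBot ℕ) := by
  by_cases h0 : h = 0
  · simp [h0]
    try exact WithBot.bot_lt_coe m
  · rw [degree_eq_natDegree h0, Nat.cast_lt] at hh
    calc (f * h).degree ≤ ((f * h).natDegree : WithBot ℕ) := degree_le_natDegree
      _ ≤ ((f.natDegree + h.natDegree : ℕ) : WithBot ℕ) := by
          exact_mod_cast Nat.cast_le.mpr natDegree_mul_le
      _ < (m : WithBot ℕ) := by
          rw [Nat.cast_lt]; omega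

lemma degreeLT_finite (k : Type*) [Field k] (n : ℕ) :
    Module.Finite k (Polynomial.degreeLT k n) :=
  Module.Finite.equiv (Polynomial.degreeLTEquiv k n).symm

theorem stmt_1 {k : Type*} [Field k] (f₁ f₂ : Polynomial k)
    (hunit : Ideal.span {f₁, f₂} = (⊤ : Ideal (Polynomial k)))
    (m : ℕ) (d : ℕ) (hd : d = max f₁.natDegree f₂.natDegree)
    (V : Submodule k (Polynomial k))
    (hV : V = Submodule.span k
      {h : Polynomial k | ∃ g₁ g₂ : Polynomial k,
        g₁.degree < (m : WithBot ℕ) ∧ g₂.degree < (m : WithBot ℕ) ∧ h = f₁ * g₁ + f₂ * g₂}) :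
    Module.finrank k V = min (2 * m) (m + d) := by
  classical
  -- get Bezout coefficients
  have h1 : (1 : Polynomial k) ∈ Ideal.span ({f₁, f₂} : Set (Polynomial k)) := by
    rw [hunit]; trivial
  obtain ⟨u, v, huv⟩ := Ideal.mem_span_pair.mp h1
  have hnz : f₁ ≠ 0 ∨ f₂ ≠ 0 := by
    by_contra hc
    push_neg at hc
    rw [hc.1, hc.2] at huv
    simp at huv
  -- a nonzero polynomial among f₁ f₂ of natDegree d
  have hbig : ∃ f : Polynomial k, (f = f₁ ∨ f = f₂) ∧ f ≠ 0 ∧ f.natDegree = d := by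
    rcases hnz with h | h
    · by_cases h2 : f₂.natDegree = d ∧ f₂ ≠ 0
      · exact ⟨f₂, Or.inr rfl, h2.2, h2.1⟩
      · refine ⟨f₁, Or.inl rfl, h, ?_⟩
        by_cases hz : f₂ = 0
        · simp [hz, hd]
        · simp only [hz, ne_eq, not_false_eq_true, and_true] at h2
          omega
    · by_cases h1' : f₁.natDegree = d ∧ f₁ ≠ 0
      · exact ⟨f₁, Or.inl rfl, h1'.2, h1'.1⟩
      · refine ⟨f₂, Or.inr rfl, h, ?_⟩
        by_cases hz : f₁ = 0
        · simp [hz, hd]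
        · simp only [hz, ne_eq, not_false_eq_true, and_true] at h1'
          omega
  have hd1 : f₁.natDegree ≤ d := by omega
  have hd2 : f₂.natDegree ≤ d := by omega
  -- the linear map φ
  set W := Polynomial.degreeLT k m with hW
  haveI : Module.Finite k W := degreeLT_finite k m
  haveI : Module.Finite k (Polynomial.degreeLT k (m - d)) := degreeLT_finite k (m - d)
  let φ : (W × W) →ₗ[k] Polynomial k :=
    { toFun := fun p => f₁ * p.1.1 + f₂ * p.2.1
      map_add' := fun a b => by
        simp only [Submodule.coe_add, Prod.fst_add, Prod.snd_add]
        ring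
      map_smul' := fun c a => by
        simp only [Prod.smul_fst, Prod.smul_snd, SetLike.val_smul, smul_eq_mul,
          RingHom.id_apply, smul_add]
        rw [mul_smul_comm, mul_smul_comm] }
  have hVr : V = LinearMap.range φ := by
    rw [hV]
    apply le_antisymm
    · rw [Submodule.span_le]
      rintro x ⟨g₁, g₂, hg1, hg2, rfl⟩
      exact ⟨(⟨g₁, Polynomial.mem_degreeLT.2 hg1⟩, ⟨g₂, Polynomial.mem_degreeLT.2 hg2⟩), rfl⟩
    · rintro x ⟨⟨g₁, g₂⟩, rfl⟩
      exact Submodule.subset_span ⟨g₁, g₂, Polynomial.mem_degreeLT.1 g₁.2,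
        Polynomial.mem_degreeLT.1 g₂.2, rfl⟩
  -- the kernel parametrization
  let ψ : (Polynomial.degreeLT k (m - d)) →ₗ[k] (W × W) :=
    { toFun := fun h =>
        (⟨f₂ * h.1, Polynomial.mem_degreeLT.2
            (mul_mem_degreeLT_aux hd2 (Polynomial.mem_degreeLT.1 h.2))⟩,
         ⟨-(f₁ * h.1), by
            rw [Polynomial.mem_degreeLT, degree_neg]
            exact mul_mem_degreeLT_aux hd1 (Polynomial.mem_degreeLT.1 h.2)⟩)
      map_add' := fun a b => by
        refine Prod.ext (Subtype.ext ?_) (Subtype.ext ?_) <;>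
          simp [mul_add] <;> ring
      map_smul' := fun c a => by
        refine Prod.ext (Subtype.ext ?_) (Subtype.ext ?_) <;>
          simp [Algebra.mul_smul_comm] }
  have hψinj : Function.Injective ψ := by
    rw [← LinearMap.ker_eq_bot, LinearMap.ker_eq_bot']
    rintro ⟨h, hh⟩ hz
    have h2 : f₂ * h = 0 ∧ -(f₁ * h) = 0 := by
      constructor
      · exact congrArg Subtype.val (congrArg Prod.fst hz)
      · exact congrArg Subtype.val (congrArg Prod.snd hz)
    apply Subtype.ext
    rcases hnz with h' | h'
    · have := h2.2
      rw [neg_eq_zero, mul_eq_zero] at this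
      exact this.resolve_left h'
    · have := h2.1
      rw [mul_eq_zero] at this
      exact this.resolve_left h'
  have hkerr : LinearMap.range ψ = LinearMap.ker φ := by
    apply le_antisymm
    · rintro x ⟨h, rfl⟩
      simp only [LinearMap.mem_ker]
      show f₁ * (f₂ * h.1) + f₂ * (-(f₁ * h.1)) = 0
      ring
    · rintro ⟨⟨g₁, hg1⟩, ⟨g₂, hg2⟩⟩ hker
      have hker' : f₁ * g₁ + f₂ * g₂ = 0 := hker
      set h : Polynomial k := v * g₁ - u * g₂ with hhdef
      have e1 : f₂ * h = g₁ := by rw [hhdef]; linear_combination g₁ * huv - u * hker'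
      have e2 : -(f₁ * h) = g₂ := by rw [hhdef]; linear_combination g₂ * huv - v * hker'
      obtain ⟨f, hf12, hfnz, hfd⟩ := hbig
      have hfh : (f * h).degree < (m : WithBot ℕ) := by
        rcases hf12 with rfl | rfl
        · have : f * h = -g₂ := by rw [← e2]; ring
          rw [this, degree_neg]
          exact Polynomial.mem_degreeLT.1 hg2
        · rw [e1]
          exact Polynomial.mem_degreeLT.1 hg1
      have hhlt : h.degree < ((m - d : ℕ) : WithBot ℕ) := by
        by_cases h0 : h = 0
        · rw [h0, degree_zero]
          exact WithBot.bot_lt_coe _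
        · rw [degree_eq_natDegree h0, Nat.cast_lt]
          rw [degree_mul, degree_eq_natDegree hfnz, degree_eq_natDegree h0,
            ← Nat.cast_add, Nat.cast_lt] at hfh
          omega
      refine ⟨⟨h, Polynomial.mem_degreeLT.2 hhlt⟩, ?_⟩
      refine Prod.ext (Subtype.ext ?_) (Subtype.ext ?_)
      · exact e1
      · exact e2
  -- finrank computations
  have hfin1 : Module.finrank k (LinearMap.ker φ) = m - d := by
    rw [← hkerr, LinearMap.finrank_range_of_inj hψinj, degreeLT_finrank]
  have hfin2 : Module.finrank k (LinearMap.range φ) + Module.finrank k (LinearMap.ker φ)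
      = Module.finrank k (W × W) := LinearMap.finrank_range_add_finrank_ker φ
  have hfinW : Module.finrank k (W × W) = m + m := by
    rw [Module.finrank_prod, hW, degreeLT_finrank]
  rw [hVr]
  omega
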